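/- Small-m energy comparison: for d ≥ 3, q > 1, with r_*, r^*, φ as in the radial example, if m > 0 satisfies m² < ((r^*)^{2−d} − 1)/(d−2) · ∫_{r_*}^{r^*} (ρ − r_*)^{−1/q} ρ^{d−1} dρ, then the radial competitor u_{r^*} (equal 0 in B_{r^*}, harmonic in the annulus, equal m on ∂B₁) has strictly smaller energy J(u_{r^*}) < J(m) = ∫_{B₁} φ dx than the constant function m, where J(v) = ∫_{B₁}(|∇v|² + φ·1_{v>0}) dx. -/

import Mathlib

open MeasureTheory Metric Set intervalIntegral

/-- `r_* = (1/(d-1))^{1/(d-2)}`. -/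
noncomputable def rStar (d : ℕ) : ℝ := ((d : ℝ) - 1)⁻¹ ^ (((d : ℝ) - 2)⁻¹)

/-- `r^* = (1 + r_*)/2`. -/
noncomputable def rStarUp (d : ℕ) : ℝ := (1 + rStar d) / 2

/-- The radial profile of the Bernoulli function in the example. -/
noncomputable def phiRad (d : ℕ) (q m : ℝ) (ρ : ℝ) : ℝ :=
  if ρ < rStar d then (m * rStar d ^ (d - 1)) ^ 2
  else if ρ < rStarUp d then (ρ - rStar d) ^ (-(1 : ℝ) / q)
  else (m * rStar d ^ (d - 1)) ^ 2

/-- The radial competitor: `0` in `B_r`, harmonic in the annulus, `m` on `∂B₁`. -/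
noncomputable def urad (d : ℕ) (m r : ℝ) (x : EuclideanSpace ℝ (Fin d)) : ℝ :=
  if ‖x‖ < r then 0
  else m * (r ^ ((2 : ℝ) - d) - ‖x‖ ^ ((2 : ℝ) - d)) / (r ^ ((2 : ℝ) - d) - 1)

variable {E : Type*} [NormedAddCommGroup E] [InnerProductSpace ℝ E] [CompleteSpace E]

lemma my_hasFDerivAt_norm_rpow (x : E) (hx : x ≠ 0) (p : ℝ) :
    HasFDerivAt (fun y : E => ‖y‖ ^ p) ((p * ‖x‖ ^ (p - 2)) • innerSL ℝ x) x := by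
  have hx' : (0:ℝ) < ‖x‖ := norm_pos_iff.2 hx
  have h1 : HasFDerivAt (fun y : E => ‖y‖ ^ (2:ℕ)) (2 • innerSL ℝ x) x :=
    (hasStrictFDerivAt_norm_sq x).hasFDerivAt
  have h2 := h1.rpow_const (p := p/2) (Or.inl (by positivity))
  have heq : (fun y : E => (‖y‖ ^ (2:ℕ)) ^ (p/2)) = fun y : E => ‖y‖ ^ p := by
    funext y
    rw [← Real.rpow_natCast ‖y‖ 2, ← Real.rpow_mul (norm_nonneg y)]
    congr 1; push_cast; ring
  rw [heq] at h2
  convert h2 using 1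
  rw [← Nat.cast_smul_eq_nsmul ℝ, smul_smul]
  congr 1
  rw [← Real.rpow_natCast ‖x‖ 2, ← Real.rpow_mul (norm_nonneg x)]
  have : (2:ℝ) * (p/2 - 1) = p - 2 := by ring
  rw [Nat.cast_ofNat, this]
  ring

lemma my_norm_gradient (f : E → ℝ) (x : E) : ‖gradient f x‖ = ‖fderiv ℝ f x‖ := by
  simp [gradient, LinearIsometryEquiv.norm_map]


lemma one_lt_A {r : ℝ} {d : ℕ} (hd : 3 ≤ d) (hr0 : 0 < r) (hr1 : r < 1) :
    1 < r ^ ((2:ℝ) - d) := by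
  have hp : ((2:ℝ) - d) < 0 := by
    have : (3:ℝ) ≤ d := by exact_mod_cast hd
    linarith
  calc (1:ℝ) = 1 ^ ((2:ℝ) - d) := (Real.one_rpow _).symm
  _ < r ^ ((2:ℝ) - d) := Real.rpow_lt_rpow_of_neg hr0 hr1 hp

lemma urad_grad_inner {d : ℕ} (m r : ℝ) {x : EuclideanSpace ℝ (Fin d)}
    (hx : ‖x‖ < r) : gradient (urad d m r) x = 0 := by
  have hev : urad d m r =ᶠ[nhds x] (fun _ => (0:ℝ)) := by
    refine Filter.eventuallyEq_of_mem (isOpen_ball.mem_nhds (mem_ball_zero_iff.2 hx)) ?_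
    intro y hy
    simp [urad, mem_ball_zero_iff.1 hy]
  rw [hev.gradient_eq]
  exact gradient_const x 0

lemma urad_pos {d : ℕ} (hd : 3 ≤ d) {m r : ℝ} (hm : 0 < m) (hr0 : 0 < r) (hr1 : r < 1)
    {x : EuclideanSpace ℝ (Fin d)} (hx : r < ‖x‖) : 0 < urad d m r x := by
  have hA := one_lt_A hd hr0 hr1
  have hp : ((2:ℝ) - d) < 0 := by
    have : (3:ℝ) ≤ d := by exact_mod_cast hd
    linarith
  have h2 : ‖x‖ ^ ((2:ℝ) - d) < r ^ ((2:ℝ) - d) := Real.rpow_lt_rpow_of_neg hr0 hx hp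
  rw [urad, if_neg (not_lt.2 hx.le)]
  have h1 : 0 < r ^ ((2:ℝ) - d) - 1 := by linarith
  exact div_pos (mul_pos hm (by linarith)) h1

lemma urad_grad_outer {d : ℕ} (hd : 3 ≤ d) {m r : ℝ} (hm : 0 < m) (hr0 : 0 < r) (hr1 : r < 1)
    {x : EuclideanSpace ℝ (Fin d)} (hx : r < ‖x‖) :
    ‖gradient (urad d m r) x‖ =
      m * ((d:ℝ) - 2) / (r ^ ((2:ℝ) - d) - 1) * ‖x‖ ^ ((1:ℝ) - d) := by
  set p : ℝ := (2:ℝ) - d with hpdef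
  set A : ℝ := r ^ p with hAdef
  have hA : 1 < A := one_lt_A hd hr0 hr1
  have hd2 : (2:ℝ) < d := by
    have : (3:ℝ) ≤ d := by exact_mod_cast hd
    linarith
  have hx0 : x ≠ 0 := by
    intro h; rw [h] at hx; simp at hx; linarith
  have hxn : (0:ℝ) < ‖x‖ := lt_trans hr0 hx
  set w : EuclideanSpace ℝ (Fin d) → ℝ := fun y => m * (A - ‖y‖ ^ p) / (A - 1) with hwdef
  set c : ℝ := m * (-(p * ‖x‖ ^ (p - 2))) / (A - 1) with hcdef
  have hw : HasFDerivAt w (c • innerSL ℝ x) x := by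
    have hn := my_hasFDerivAt_norm_rpow x hx0 p
    have h := (((hasFDerivAt_const A x).sub hn).const_mul m).mul_const ((A - 1)⁻¹)
    have hfun : w = fun y => (m * (A - ‖y‖ ^ p)) * (A - 1)⁻¹ := by
      funext y; rw [hwdef]; ring
    rw [hfun]
    refine h.congr_fderiv ?_
    ext y
    simp [hcdef]
    ring
  have hev : urad d m r =ᶠ[nhds x] w := by
    have hopen : IsOpen {y : EuclideanSpace ℝ (Fin d) | r < ‖y‖} :=
      isOpen_lt continuous_const continuous_norm
    refine Filter.eventuallyEq_of_mem (hopen.mem_nhds hx) ?_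
    intro y hy
    simp only [mem_setOf_eq] at hy
    simp only [urad, hwdef, if_neg (not_lt.2 (le_of_lt hy))]
    rfl
  rw [my_norm_gradient, hev.fderiv_eq, hw.fderiv, norm_smul, innerSL_apply_norm]
  have hc : |c| = m * ((d:ℝ) - 2) / (A - 1) * ‖x‖ ^ (p - 2) := by
    rw [hcdef, abs_div, abs_of_pos (by linarith : (0:ℝ) < A - 1), abs_mul,
      abs_of_pos hm, abs_neg, abs_mul, abs_of_nonpos (by rw [hpdef]; linarith),
      abs_of_nonneg (Real.rpow_nonneg (norm_nonneg x) _)]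
    rw [hpdef]; ring
  rw [Real.norm_eq_abs, hc]
  rw [mul_assoc, ← Real.rpow_add_one (ne_of_gt hxn)]
  congr 1
  rw [hpdef]; ring

lemma rStar_mem (d : ℕ) (hd : 3 ≤ d) : 0 < rStar d ∧ rStar d < 1 := by
  have h1 : (3:ℝ) ≤ d := by exact_mod_cast hd
  have hb0 : (0:ℝ) < ((d:ℝ) - 1)⁻¹ := inv_pos.2 (by linarith)
  have hb1 : ((d:ℝ) - 1)⁻¹ < 1 := by
    rw [inv_lt_one_iff₀]; right; linarith
  have he : (0:ℝ) < ((d:ℝ) - 2)⁻¹ := inv_pos.2 (by linarith)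
  exact ⟨Real.rpow_pos_of_pos hb0 _, Real.rpow_lt_one hb0.le hb1 he⟩

lemma oneD (d : ℕ) (hd : 3 ≤ d) (q : ℝ) (hq : 1 < q) (s r C K : ℝ)
    (hs0 : 0 < s) (hsr : s < r) (hr1 : r < 1) (hK : 0 ≤ K) (hC : 0 ≤ C)
    (φ : ℝ → ℝ)
    (hφ1 : ∀ y, y < s → φ y = K) (hφ2 : ∀ y, s ≤ y → y < r → φ y = (y - s) ^ (-(1:ℝ)/q))
    (hφ3 : ∀ y, r ≤ y → φ y = K)
    (hmain : C * (1 - r ^ ((2:ℝ) - d)) / (2 - (d:ℝ)) <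
      ∫ ρ in s..r, (ρ - s) ^ (-(1:ℝ)/q) * ρ ^ (d - 1)) :
    (∫ y in Ioi (0:ℝ), y ^ (d - 1) •
        (if y ≤ r then (0:ℝ) else if y < 1 then C * y ^ ((2:ℝ) - 2*d) + φ y else 0)) <
    ∫ y in Ioi (0:ℝ), y ^ (d - 1) • (if y < 1 then φ y else 0) := by
  have hr0 : 0 < r := lt_trans hs0 hsr
  have hd2 : (2:ℝ) < d := by
    have : (3:ℝ) ≤ d := by exact_mod_cast hd
    linarith
  have hφ0 : ∀ y, 0 ≤ φ y := by
    intro y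
    rcases lt_or_ge y s with h | h
    · rw [hφ1 y h]; exact hK
    · rcases lt_or_ge y r with h2 | h2
      · rw [hφ2 y h h2]; exact Real.rpow_nonneg (by linarith) _
      · rw [hφ3 y h2]; exact hK
  -- LHS rewrite
  have hL1 : (∫ y in Ioi (0:ℝ), y ^ (d - 1) •
        (if y ≤ r then (0:ℝ) else if y < 1 then C * y ^ ((2:ℝ) - 2*d) + φ y else 0)) =
      ∫ y in Ioo r 1, (C * y ^ ((1:ℝ) - d) + K * y ^ (d - 1)) := by
    have hcongr : EqOn (fun y : ℝ => y ^ (d - 1) •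
        (if y ≤ r then (0:ℝ) else if y < 1 then C * y ^ ((2:ℝ) - 2*d) + φ y else 0))
        ((Ioo r 1).indicator (fun y => C * y ^ ((1:ℝ) - d) + K * y ^ (d - 1))) (Ioi 0) := by
      intro y hy
      simp only [mem_Ioi] at hy
      simp only
      rcases le_or_gt y r with h1 | h1
      · rw [if_pos h1, indicator_of_notMem (fun h => absurd h.1 (not_lt.2 h1))]
        simp
      · rcases lt_or_ge y 1 with h2 | h2
        · rw [if_neg (not_le.2 h1), if_pos h2, indicator_of_mem (mem_Ioo.2 ⟨h1, h2⟩)]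
          rw [hφ3 y h1.le, smul_eq_mul]
          have hy0 : (0:ℝ) < y := hy
          rw [mul_add]
          congr 1
          swap
          · ring
          rw [← Real.rpow_natCast y (d-1), ← mul_assoc, mul_comm (y ^ (((d:ℕ) - 1 : ℕ):ℝ)) C,
            mul_assoc, ← Real.rpow_add hy0]
          congr 1
          have hcast : ((d - 1 : ℕ) : ℝ) = (d:ℝ) - 1 := by
            have h1d : (1:ℕ) ≤ d := by omega
            push_cast [h1d]; ring
          rw [hcast]; ring
        · rw [if_neg (not_le.2 h1), if_neg (not_lt.2 h2),
            indicator_of_notMem (fun h => absurd h.2 (not_lt.2 h2))]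
          simp
    rw [setIntegral_congr_fun measurableSet_Ioi hcongr,
      setIntegral_indicator measurableSet_Ioo,
      inter_eq_right.2 (fun y hy => mem_Ioi.2 (lt_trans hr0 (mem_Ioo.1 hy).1))]
  -- RHS rewrite
  have hR1 : (∫ y in Ioi (0:ℝ), y ^ (d - 1) • (if y < 1 then φ y else 0)) =
      ∫ y in Ioo 0 1, y ^ (d - 1) * φ y := by
    have hcongr : EqOn (fun y : ℝ => y ^ (d - 1) • (if y < 1 then φ y else 0))
        ((Ioo 0 1).indicator (fun y => y ^ (d - 1) * φ y)) (Ioi 0) := by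
      intro y hy
      simp only [mem_Ioi] at hy
      simp only
      rcases lt_or_ge y 1 with h2 | h2
      · rw [if_pos h2, indicator_of_mem (mem_Ioo.2 ⟨hy, h2⟩), smul_eq_mul]
      · rw [if_neg (not_lt.2 h2), indicator_of_notMem (fun h => absurd h.2 (not_lt.2 h2))]
        simp
    rw [setIntegral_congr_fun measurableSet_Ioi hcongr,
      setIntegral_indicator measurableSet_Ioo,
      inter_eq_right.2 (fun y hy => mem_Ioi.2 (mem_Ioo.1 hy).1)]
  rw [hL1, hR1]
  set I : ℝ := ∫ ρ in s..r, (ρ - s) ^ (-(1:ℝ)/q) * ρ ^ (d - 1) with hIdef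
  have hne : ∀ᵐ y : ℝ, y ≠ r := by
    have hset : {y : ℝ | ¬ y ≠ r} = {r} := by ext y; simp
    rw [ae_iff, hset]; exact measure_singleton r
  have hns : ∀ᵐ y : ℝ, y ≠ s := by
    have hset : {y : ℝ | ¬ y ≠ s} = {s} := by ext y; simp
    rw [ae_iff, hset]; exact measure_singleton s
  -- integrability of the singular piece
  have hIsr : IntegrableOn (fun y : ℝ => (y - s) ^ (-(1:ℝ)/q) * y ^ (d - 1)) (Ioc s r) := by
    have hexp : (-1:ℝ) < -(1:ℝ)/q := by
      have h1 : (1:ℝ)/q < 1 := by rw [div_lt_one (by linarith)]; linarith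
      rw [neg_div]; linarith
    have h0 : IntervalIntegrable (fun u : ℝ => u ^ (-(1:ℝ)/q)) volume 0 (r - s) :=
      intervalIntegrable_rpow' hexp
    have h1 := h0.comp_sub_right s
    rw [zero_add, sub_add_cancel] at h1
    have h2 := h1.mul_continuousOn (Continuous.continuousOn (by continuity :
      Continuous (fun y : ℝ => y ^ (d - 1))))
    exact (intervalIntegrable_iff_integrableOn_Ioc_of_le hsr.le).1 h2
  -- integrability of the RHS integrand
  have hg : IntegrableOn (fun y : ℝ => y ^ (d - 1) * φ y) (Ioo 0 1) := by
    have hsub : Ioo (0:ℝ) 1 ⊆ Ioc 0 s ∪ (Ioc s r ∪ Ioc r 1) := by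
      intro y hy
      rcases le_or_gt y s with h | h
      · exact Or.inl ⟨hy.1, h⟩
      · rcases le_or_gt y r with h2 | h2
        · exact Or.inr (Or.inl ⟨h, h2⟩)
        · exact Or.inr (Or.inr ⟨h2, hy.2.le⟩)
    refine IntegrableOn.mono_set ?_ hsub
    refine IntegrableOn.union ?_ (IntegrableOn.union ?_ ?_)
    · refine (((continuous_pow (d-1)).mul (continuous_const : Continuous fun _ : ℝ => K)).integrableOn_Ioc).congr ?_
      filter_upwards [ae_restrict_mem measurableSet_Ioc, ae_restrict_of_ae hns] with y hy hys
      rw [hφ1 y (lt_of_le_of_ne hy.2 hys)]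
      rfl
    · refine hIsr.congr ?_
      filter_upwards [ae_restrict_mem measurableSet_Ioc, ae_restrict_of_ae hne] with y hy hyr
      rw [hφ2 y hy.1.le (lt_of_le_of_ne hy.2 hyr)]
      ring
    · refine (((continuous_pow (d-1)).mul (continuous_const : Continuous fun _ : ℝ => K)).integrableOn_Ioc).congr ?_
      filter_upwards [ae_restrict_mem measurableSet_Ioc] with y hy
      rw [hφ3 y hy.1.le]
      rfl
  -- LHS integrability and value
  have hi1 : IntegrableOn (fun y : ℝ => C * y ^ ((1:ℝ) - d)) (Ioo r 1) := by
    have h0 : IntervalIntegrable (fun y : ℝ => y ^ ((1:ℝ) - d)) volume r 1 := by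
      apply intervalIntegrable_rpow (Or.inr ?_)
      rw [uIcc_of_le hr1.le]
      intro h
      exact absurd h.1 (not_le.2 hr0)
    exact ((intervalIntegrable_iff_integrableOn_Ioc_of_le hr1.le).1
      (h0.const_mul C)).mono_set Ioo_subset_Ioc_self
  have hi2 : IntegrableOn (fun y : ℝ => K * y ^ (d - 1)) (Ioo r 1) :=
    (((continuous_const : Continuous fun _ : ℝ => K).mul (continuous_pow (d-1))).integrableOn_Ioc).mono_set
      Ioo_subset_Ioc_self
  rw [integral_add hi1 hi2]
  set B : ℝ := ∫ y in Ioo r 1, K * y ^ (d - 1) with hBdef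
  have hpow : (∫ y in Ioo r 1, C * y ^ ((1:ℝ) - d)) =
      C * (1 - r ^ ((2:ℝ) - d)) / (2 - (d:ℝ)) := by
    rw [← integral_Ioc_eq_integral_Ioo, ← intervalIntegral.integral_of_le hr1.le,
      intervalIntegral.integral_const_mul, integral_rpow (Or.inr ⟨by
        intro h
        have : (d:ℝ) = 2 := by linarith [congrArg (fun t => t + (d:ℝ)) h]
        linarith, by
        rw [uIcc_of_le hr1.le]
        intro h
        exact absurd h.1 (not_le.2 hr0)⟩)]
    have he : (1:ℝ) - d + 1 = 2 - d := by ring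
    rw [he, Real.one_rpow]
    ring
  rw [hpow]
  -- RHS lower bound
  have hsub1 : Ioc s r ⊆ Ioo (0:ℝ) 1 := fun y hy => ⟨lt_trans hs0 hy.1, lt_of_le_of_lt hy.2 hr1⟩
  have hsub2 : Ioo r 1 ⊆ Ioo (0:ℝ) 1 := fun y hy => ⟨lt_trans hr0 hy.1, hy.2⟩
  have hdisj : Disjoint (Ioc s r) (Ioo r 1) := by
    rw [disjoint_left]
    intro y h1 h2
    exact absurd h2.1 (not_lt.2 h1.2)
  have hunion : (∫ y in Ioc s r ∪ Ioo r 1, y ^ (d - 1) * φ y) ≤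
      ∫ y in Ioo 0 1, y ^ (d - 1) * φ y := by
    refine setIntegral_mono_set hg ?_ (HasSubset.Subset.eventuallyLE (union_subset hsub1 hsub2))
    filter_upwards [ae_restrict_mem measurableSet_Ioo] with y hy
    exact mul_nonneg (pow_nonneg hy.1.le _) (hφ0 y)
  have hsplit : (∫ y in Ioc s r ∪ Ioo r 1, y ^ (d - 1) * φ y) =
      (∫ y in Ioc s r, y ^ (d - 1) * φ y) + ∫ y in Ioo r 1, y ^ (d - 1) * φ y :=
    setIntegral_union hdisj measurableSet_Ioo (hg.mono_set hsub1) (hg.mono_set hsub2)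
  have hI : (∫ y in Ioc s r, y ^ (d - 1) * φ y) = I := by
    rw [hIdef, intervalIntegral.integral_of_le hsr.le]
    apply setIntegral_congr_ae measurableSet_Ioc
    filter_upwards [hne] with y hyr hy
    rw [hφ2 y hy.1.le (lt_of_le_of_ne hy.2 hyr)]
    ring
  have hB : (∫ y in Ioo r 1, y ^ (d - 1) * φ y) = B := by
    rw [hBdef]
    apply setIntegral_congr_fun measurableSet_Ioo
    intro y hy
    simp only
    rw [hφ3 y hy.1.le]
    ring
  have hfin : C * (1 - r ^ ((2:ℝ) - d)) / (2 - (d:ℝ)) + B < I + B := by linarith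
  calc C * (1 - r ^ ((2:ℝ) - d)) / (2 - (d:ℝ)) + B < I + B := hfin
    _ = ∫ y in Ioc s r ∪ Ioo r 1, y ^ (d - 1) * φ y := by rw [hsplit, hI, hB]
    _ ≤ ∫ y in Ioo 0 1, y ^ (d - 1) * φ y := hunion

/-- **Small-`m` energy comparison.** For `d ≥ 3`, `q > 1`, if
`m² < ((r^*)^{2-d} - 1)/(d-2) · ∫_{r_*}^{r^*} (ρ - r_*)^{-1/q} ρ^{d-1} dρ`, then the radial
competitor `u_{r^*}` has strictly smaller energy
`J(v) = ∫_{B₁} (|∇v|² + φ · 1_{v>0})` than the constant function `m`. -/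
theorem stmt17 (d : ℕ) (hd : 3 ≤ d) (q m : ℝ) (hq : 1 < q) (hm : 0 < m)
    (hsmall : m ^ 2 < ((rStarUp d ^ ((2 : ℝ) - d) - 1) / ((d : ℝ) - 2)) *
      ∫ ρ in rStar d..rStarUp d, (ρ - rStar d) ^ (-(1 : ℝ) / q) * ρ ^ (d - 1)) :
    (∫ x in ball (0 : EuclideanSpace ℝ (Fin d)) 1,
        (‖gradient (urad d m (rStarUp d)) x‖ ^ 2 +
          (if 0 < urad d m (rStarUp d) x then phiRad d q m ‖x‖ else 0))) <
      ∫ x in ball (0 : EuclideanSpace ℝ (Fin d)) 1,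
        (‖gradient (fun _ : EuclideanSpace ℝ (Fin d) => m) x‖ ^ 2 +
          (if 0 < m then phiRad d q m ‖x‖ else 0)) := by

  have hs := rStar_mem d hd
  set s : ℝ := rStar d with hsdef
  set r : ℝ := rStarUp d with hrdef
  have hsr : s < r := by rw [hrdef, rStarUp, ← hsdef]; linarith [hs.1, hs.2]
  have hr0 : 0 < r := lt_trans hs.1 hsr
  have hr1 : r < 1 := by rw [hrdef, rStarUp, ← hsdef]; linarith [hs.2]
  set A : ℝ := r ^ ((2:ℝ) - d) with hAdef
  set C : ℝ := (m * ((d:ℝ) - 2) / (A - 1))^2 with hCdef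
  set φ : ℝ → ℝ := phiRad d q m with hφdef
  set fL : ℝ → ℝ := fun y => if y ≤ r then 0 else if y < 1 then C * y ^ ((2:ℝ) - 2*d) + φ y else 0
    with hfLdef
  set fR : ℝ → ℝ := fun y => if y < 1 then φ y else 0 with hfRdef
  haveI : Nonempty (Fin d) := ⟨⟨0, by omega⟩⟩
  haveI : Nontrivial (EuclideanSpace ℝ (Fin d)) := by infer_instance
  have hd2 : (2:ℝ) < d := by
    have : (3:ℝ) ≤ d := by exact_mod_cast hd
    linarith
  -- LHS as a function of the norm
  have hLeq : (∫ x in ball (0 : EuclideanSpace ℝ (Fin d)) 1,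
        (‖gradient (urad d m r) x‖ ^ 2 +
          (if 0 < urad d m r x then φ ‖x‖ else 0))) = ∫ x : EuclideanSpace ℝ (Fin d), fL ‖x‖ := by
    rw [← MeasureTheory.integral_indicator measurableSet_ball]
    apply MeasureTheory.integral_congr_ae
    have hae : ∀ᵐ x : EuclideanSpace ℝ (Fin d), ‖x‖ ≠ r := by
      rw [ae_iff]
      have h0 : volume (sphere (0 : EuclideanSpace ℝ (Fin d)) r) = 0 :=
        Measure.addHaar_sphere volume 0 r
      convert h0 using 2
      ext x
      simp [mem_sphere_zero_iff_norm]
    filter_upwards [hae] with x hx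
    by_cases h1 : ‖x‖ < r
    · rw [indicator_of_mem (mem_ball_zero_iff.2 (lt_trans h1 hr1))]
      rw [urad_grad_inner m r h1]
      rw [hfLdef]
      simp only [if_pos h1.le]
      rw [urad, if_pos h1]
      simp
    · have h1' : r < ‖x‖ := lt_of_le_of_ne (not_lt.1 h1) (Ne.symm hx)
      by_cases h2 : ‖x‖ < 1
      · rw [indicator_of_mem (mem_ball_zero_iff.2 h2)]
        rw [urad_grad_outer hd hm hr0 hr1 h1', if_pos (urad_pos hd hm hr0 hr1 h1')]
        rw [hfLdef]
        simp only [not_le.2 h1', if_neg (not_le.2 h1'), if_pos h2]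
        congr 1
        rw [hCdef, mul_pow, ← Real.rpow_natCast (‖x‖ ^ ((1:ℝ) - d)) 2,
          ← Real.rpow_mul (norm_nonneg x)]
        congr 1
        push_cast; ring
      · rw [indicator_of_notMem (fun h => h2 (mem_ball_zero_iff.1 h))]
        rw [hfLdef]
        simp only [if_neg (not_le.2 h1'), if_neg h2]
  have hReq : (∫ x in ball (0 : EuclideanSpace ℝ (Fin d)) 1,
        (‖gradient (fun _ : EuclideanSpace ℝ (Fin d) => m) x‖ ^ 2 +
          (if 0 < m then φ ‖x‖ else 0))) = ∫ x : EuclideanSpace ℝ (Fin d), fR ‖x‖ := by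
    rw [← MeasureTheory.integral_indicator measurableSet_ball]
    apply MeasureTheory.integral_congr_ae
    apply Filter.Eventually.of_forall
    intro x
    by_cases h2 : ‖x‖ < 1
    · rw [indicator_of_mem (mem_ball_zero_iff.2 h2)]
      rw [gradient_fun_const, if_pos hm, hfRdef]
      simp only [if_pos h2]
      simp
    · rw [indicator_of_notMem (fun h => h2 (mem_ball_zero_iff.1 h)), hfRdef]
      simp only [if_neg h2]
  rw [hLeq, hReq, integral_fun_norm_addHaar (volume) fL, integral_fun_norm_addHaar (volume) fR,
    finrank_euclideanSpace_fin]
  have hV : (0:ℝ) < (volume (ball (0 : EuclideanSpace ℝ (Fin d)) 1)).toReal :=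
    ENNReal.toReal_pos (measure_ball_pos volume 0 one_pos).ne' measure_ball_lt_top.ne
  have h1d : (∫ y in Ioi (0:ℝ), y ^ (d - 1) • fL y) < ∫ y in Ioi (0:ℝ), y ^ (d - 1) • fR y := by
    simp only [hfLdef, hfRdef]
    have hA1 : 1 < A := one_lt_A hd hr0 hr1
    refine oneD d hd q hq s r C ((m * s ^ (d - 1))^2) hs.1 hsr hr1 (sq_nonneg _) (sq_nonneg _)
      φ ?_ ?_ ?_ ?_
    · intro y hy
      rw [hφdef, phiRad, if_pos (show y < rStar d from hsdef ▸ hy), ← hsdef]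
    · intro y h1 h2
      rw [hφdef, phiRad, if_neg (show ¬ y < rStar d from hsdef ▸ not_lt.2 h1),
        if_pos (show y < rStarUp d from hrdef ▸ h2), ← hsdef]
    · intro y h1
      rw [hφdef, phiRad, if_neg (show ¬ y < rStar d from hsdef ▸ not_lt.2 (by linarith)),
        if_neg (show ¬ y < rStarUp d from hrdef ▸ not_lt.2 h1), ← hsdef]
    · have heq : C * (1 - A) / (2 - (d:ℝ)) = m^2 * ((d:ℝ) - 2) / (A - 1) := by
        rw [hCdef]
        have h1 : A - 1 ≠ 0 := by linarith
        have h2 : (2:ℝ) - d ≠ 0 := by linarith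
        field_simp
        ring
      rw [← hAdef, heq]
      have h' : m^2 * ((d:ℝ) - 2) < (A - 1) * ∫ ρ in s..r, (ρ - s) ^ (-(1:ℝ)/q) * ρ ^ (d - 1) := by
        have hx := mul_lt_mul_of_pos_right hsmall (show (0:ℝ) < (d:ℝ) - 2 by linarith)
        calc m^2 * ((d:ℝ) - 2)
            < ((A - 1)/((d:ℝ) - 2) * ∫ ρ in s..r, (ρ - s) ^ (-(1:ℝ)/q) * ρ ^ (d - 1)) * ((d:ℝ) - 2) := hx
          _ = (A - 1) * ∫ ρ in s..r, (ρ - s) ^ (-(1:ℝ)/q) * ρ ^ (d - 1) := by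
              have hgen : ∀ a b c : ℝ, c ≠ 0 → (a / c * b) * c = a * b := by
                intro a b c hc; field_simp
              exact hgen _ _ _ (by linarith)
      rw [div_lt_iff₀ (by linarith : (0:ℝ) < A - 1)]
      linarith
  rw [nsmul_eq_mul, nsmul_eq_mul, smul_eq_mul, smul_eq_mul]
  have hdpos : (0:ℝ) < d := by positivity
  exact mul_lt_mul_of_pos_left (mul_lt_mul_of_pos_left h1d hV) hdpos
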